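/- Fix k ∈ ℕ with k ≥ 1 and a rational m with 0 < m < k, and let d* be the unique entropy-maximizing distribution in Δ^k_m. For every ε > 0 there exists N such that for all n ≥ N with m·n ∈ ℕ: among the states s ∈ {0,…,k}^{{1,…,n}} with ∑_{i=1}^n s(i) = m·n, the fraction of states whose empirical distribution d^s (where d^s(j) = |{i : s(i) = j}|/n) satisfies ∑_{j=0}^k (d^s(j) - d*(j))² ≥ ε is less than ε. (This is the concentration phenomenon around the maximum-entropy distribution underlying Theorem 1.) -/

import Mathlib

open Finset Real Filter




/-- The entropy `H(d) = -∑_{j : d j ≠ 0} d j * log (d j)` of a function on `{0,…,k}`. -/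
noncomputable def entropy {k : ℕ} (d : Fin (k + 1) → ℝ) : ℝ :=
  -∑ j ∈ Finset.univ.filter (fun j => d j ≠ 0), d j * Real.log (d j)

/-- `Δ^k_m`: the set of probability distributions on `{0,…,k}` with mean `m`. -/
def DeltaKM (k : ℕ) (m : ℝ) : Set (Fin (k + 1) → ℝ) :=
  {d | (∀ j, 0 ≤ d j) ∧ ∑ j, d j = 1 ∧ ∑ j : Fin (k + 1), ((j : ℕ) : ℝ) * d j = m}

/-- The empirical distribution of money in a state `s : {1,…,n} → {0,…,k}`:
`d^s(j) = |{i : s(i) = j}|/n`. -/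
noncomputable def empDist {k n : ℕ} (s : Fin n → Fin (k + 1)) : Fin (k + 1) → ℝ :=
  fun j => ((Finset.univ.filter (fun i => s i = j)).card : ℝ) / n




section ConcAux
variable {k n : ℕ}


/-- counts of a state -/
def countsOf {k n : ℕ} (s : Fin n → Fin (k + 1)) : Fin (k + 1) → ℕ :=
  fun j => #(univ.filter (fun i => s i = j))

lemma sum_countsOf (s : Fin n → Fin (k + 1)) : ∑ j, countsOf s j = n := by
  classical
  have := (Finset.card_eq_sum_card_fiberwise (fun (x : Fin n) (_ : x ∈ univ) => mem_univ (s x))).symm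
  simpa [countsOf] using this

lemma sum_val_eq_sum_counts (s : Fin n → Fin (k + 1)) :
    ∑ i, (s i : ℕ) = ∑ j : Fin (k + 1), (j : ℕ) * countsOf s j := by
  classical
  rw [← Finset.sum_fiberwise univ s (fun i => (s i : ℕ))]
  refine Finset.sum_congr rfl fun j _ => ?_
  rw [Finset.sum_congr rfl (fun i hi => ?_), Finset.sum_const, smul_eq_mul, mul_comm]
  · rfl
  · simp only [mem_filter] at hi
    rw [hi.2]

lemma countsOf_comp_perm (s : Fin n → Fin (k + 1)) (σ : Equiv.Perm (Fin n)) :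
    countsOf (s ∘ σ) = countsOf s := by
  classical
  funext j
  unfold countsOf
  apply Finset.card_bij (fun i _ => σ i)
  · intro a ha; simp only [mem_filter, mem_univ, true_and, Function.comp] at ha ⊢; exact ha
  · intro a _ b _ h; exact σ.injective h
  · intro b hb
    refine ⟨σ.symm b, ?_, by simp⟩
    simp only [mem_filter, mem_univ, true_and, Function.comp] at hb ⊢
    simpa using hb


lemma prod_apply_eq_prod_pow (s : Fin n → Fin (k + 1)) (p : Fin (k + 1) → ℝ) :
    ∏ i, p (s i) = ∏ j, p j ^ countsOf s j := by
  classical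
  have hpc : ∏ i, p (s i) = ∏ b ∈ Finset.image s Finset.univ, p b ^ (Finset.filter (fun a => s a = b) Finset.univ).card :=
    Finset.prod_comp p s
  rw [hpc]
  have : ∀ b ∈ Finset.image s Finset.univ, p b ^ (Finset.filter (fun a => s a = b) Finset.univ).card
      = p b ^ countsOf s b := fun b _ => rfl
  rw [Finset.prod_congr rfl this]
  refine Finset.prod_subset (subset_univ _) ?_
  intro j _ hj
  have : countsOf s j = 0 := by
    unfold countsOf
    rw [Finset.card_eq_zero, Finset.filter_eq_empty_iff]
    intro i _
    exact fun h => hj (Finset.mem_image.2 ⟨i, mem_univ i, h⟩)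
  rw [this, pow_zero]

lemma sum_prod_eq_one (p : Fin (k + 1) → ℝ) (hp : ∑ j, p j = 1) :
    ∑ s : Fin n → Fin (k + 1), ∏ i, p (s i) = 1 := by
  classical
  rw [← Fintype.piFinset_univ, Finset.sum_prod_piFinset univ (fun _ j => p j)]
  simp [hp]

-- Gibbs: the number of states with given counts
lemma card_counts_le (c : Fin (k + 1) → ℕ) (hc : ∑ j, c j = n) (hn : 0 < n) :
    (#(univ.filter (fun s : Fin n → Fin (k + 1) => countsOf s = c)) : ℝ) ≤
      ∏ j ∈ univ.filter (fun j => c j ≠ 0), ((n : ℝ) / c j) ^ c j := by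
  classical
  set p : Fin (k + 1) → ℝ := fun j => (c j : ℝ) / n with hpdef
  have hp1 : ∑ j, p j = 1 := by
    rw [← Finset.sum_div]
    rw [show ((∑ j, (c j:ℝ)) = (n:ℝ)) by exact_mod_cast congrArg Nat.cast hc]
    field_simp
  have hprodpos : 0 < ∏ j ∈ univ.filter (fun j => c j ≠ 0), p j ^ c j := by
    apply Finset.prod_pos
    intro j hj
    simp only [mem_filter] at hj
    apply pow_pos
    apply div_pos (by exact_mod_cast Nat.pos_of_ne_zero hj.2) (by exact_mod_cast hn)
  have hprod_eq : ∀ j, p j ^ c j = if c j = 0 then 1 else p j ^ c j := by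
    intro j; by_cases h : c j = 0 <;> simp [h]
  have key : (#(univ.filter (fun s : Fin n → Fin (k + 1) => countsOf s = c)) : ℝ) *
      ∏ j ∈ univ.filter (fun j => c j ≠ 0), p j ^ c j ≤ 1 := by
    have h1 : ∀ s : Fin n → Fin (k + 1), countsOf s = c →
        ∏ i, p (s i) = ∏ j ∈ univ.filter (fun j => c j ≠ 0), p j ^ c j := by
      intro s hs
      rw [prod_apply_eq_prod_pow s p, hs]
      refine (Finset.prod_filter_of_ne ?_).symm
      intro j _ h
      intro hc0
      exact h (by rw [hc0, pow_zero])
    calc (#(univ.filter (fun s : Fin n → Fin (k + 1) => countsOf s = c)) : ℝ) *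
          ∏ j ∈ univ.filter (fun j => c j ≠ 0), p j ^ c j
        = ∑ s ∈ univ.filter (fun s : Fin n → Fin (k + 1) => countsOf s = c), ∏ i, p (s i) := by
          rw [Finset.sum_congr rfl (fun s hs => h1 s (by simpa using (Finset.mem_filter.1 hs).2)),
            Finset.sum_const, nsmul_eq_mul]
      _ ≤ ∑ s : Fin n → Fin (k + 1), ∏ i, p (s i) := by
          apply Finset.sum_le_sum_of_subset_of_nonneg (Finset.subset_univ _)
          intro s _ _
          apply Finset.prod_nonneg
          intro i _
          exact div_nonneg (Nat.cast_nonneg _) (Nat.cast_nonneg _)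
      _ = 1 := sum_prod_eq_one p hp1
  rw [← le_div_iff₀ hprodpos] at key
  refine key.trans (le_of_eq ?_)
  rw [one_div, ← Finset.prod_inv_distrib]
  refine Finset.prod_congr rfl fun j hj => ?_
  rw [← inv_pow, hpdef]
  simp only [mem_filter] at hj
  rw [inv_div]

lemma exp_n_entropy (c : Fin (k + 1) → ℕ) (hn : 0 < n) :
    Real.exp ((n : ℝ) * entropy (fun j => (c j : ℝ) / n)) =
      ∏ j ∈ univ.filter (fun j => c j ≠ 0), ((n : ℝ) / c j) ^ c j := by
  classical
  have hn' : (0:ℝ) < n := by exact_mod_cast hn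
  have hfilter : (univ.filter (fun j => ((c j : ℝ) / n) ≠ 0)) = univ.filter (fun j => c j ≠ 0) := by
    apply Finset.filter_congr
    intro j _
    constructor
    · intro h hc0; exact h (by rw [hc0]; simp)
    · intro h hc0
      exact h (by field_simp at hc0; exact_mod_cast hc0)
  have : (n : ℝ) * entropy (fun j => (c j : ℝ) / n) =
      ∑ j ∈ univ.filter (fun j => c j ≠ 0), (c j : ℝ) * Real.log ((n : ℝ) / c j) := by
    unfold entropy
    rw [hfilter, mul_neg, Finset.mul_sum, ← Finset.sum_neg_distrib]
    refine Finset.sum_congr rfl fun j hj => ?_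
    simp only [mem_filter] at hj
    have hcj : (0:ℝ) < c j := by exact_mod_cast Nat.pos_of_ne_zero hj.2
    rw [Real.log_div (by positivity) (by positivity), Real.log_div (by positivity) (by positivity)]
    field_simp
    ring
  rw [this, Real.exp_sum]
  refine Finset.prod_congr rfl fun j hj => ?_
  simp only [mem_filter] at hj
  have hcj : (0:ℝ) < (n:ℝ) / c j := by
    have : (0:ℝ) < c j := by exact_mod_cast Nat.pos_of_ne_zero hj.2
    positivity
  rw [← Real.exp_log hcj, ← Real.exp_nat_mul]
  rw [Real.exp_log hcj]

lemma pow_self_le_exp_mul_factorial : ∀ n : ℕ, (n : ℝ) ^ n ≤ Real.exp n * n.factorial := by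
  intro n
  induction n with
  | zero => simp
  | succ n ih =>
    have h1 : ((n + 1 : ℕ) : ℝ) ^ n ≤ Real.exp 1 * (n : ℝ) ^ n := by
      rcases Nat.eq_zero_or_pos n with h | h
      · subst h; simpa using Real.one_le_exp one_pos.le
      · have hn' : (0:ℝ) < n := by exact_mod_cast h
        have heq : ((n + 1 : ℕ) : ℝ) = (n : ℝ) * (1 + 1 / n) := by push_cast; field_simp
        have hb : (1 + 1/(n:ℝ))^n ≤ Real.exp 1 := by
          calc (1 + 1/(n:ℝ))^n ≤ (Real.exp (1/n))^n := by
                apply pow_le_pow_left₀ (by positivity)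
                have := Real.add_one_le_exp (1/(n:ℝ)); linarith
            _ = Real.exp 1 := by rw [← Real.exp_nat_mul]; congr 1; field_simp
        calc ((n + 1 : ℕ) : ℝ) ^ n = (n:ℝ)^n * (1+1/(n:ℝ))^n := by rw [heq, mul_pow]
          _ ≤ (n:ℝ)^n * Real.exp 1 := by
              apply mul_le_mul_of_nonneg_left hb (by positivity)
          _ = Real.exp 1 * (n:ℝ)^n := by ring
    calc ((n+1:ℕ):ℝ) ^ (n+1) = ((n+1:ℕ):ℝ) * ((n+1:ℕ):ℝ) ^ n := by ring
      _ ≤ ((n+1:ℕ):ℝ) * (Real.exp 1 * (n:ℝ)^n) := by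
          apply mul_le_mul_of_nonneg_left h1 (by positivity)
      _ ≤ ((n+1:ℕ):ℝ) * (Real.exp 1 * (Real.exp n * n.factorial)) := by
          have : (0:ℝ) ≤ ((n+1:ℕ):ℝ) := by positivity
          gcongr
      _ = Real.exp (n+1) * ((n+1) * n.factorial) := by
          rw [Real.exp_add]; push_cast; ring
      _ = Real.exp ((n:ℝ)+1) * ((n+1).factorial) := by
          rw [Nat.factorial_succ]; push_cast; ring
      _ = Real.exp ((n+1:ℕ):ℝ) * ((n+1).factorial) := by push_cast; ring

lemma factorial_le_aux : ∀ c : ℕ, 1 ≤ c →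
    (c.factorial : ℝ) * Real.exp c ≤ Real.exp 1 * (c : ℝ) ^ (c + 1) := by
  intro c
  induction c with
  | zero => intro h; omega
  | succ c ih =>
    intro _
    rcases Nat.eq_zero_or_pos c with h | h
    · subst h; simp [Real.exp_one_rpow]
    · have hc' : (0:ℝ) < c := by exact_mod_cast h
      have h4 : (0:ℝ) < 1 - 1/((c:ℝ)+1) := by
        rw [sub_pos, div_lt_one (by positivity)]; linarith
      have h3 : 1 - 1/((c:ℝ)+1) ≤ Real.exp (-(1/((c:ℝ)+1))) := by
        have := Real.add_one_le_exp (-(1/((c:ℝ)+1))); linarith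
      have h5 : Real.exp (1/((c:ℝ)+1)) ≤ (1 - 1/((c:ℝ)+1))⁻¹ := by
        have h6 := one_div_le_one_div_of_le h4 h3
        rw [Real.exp_neg, one_div, inv_inv] at h6
        rw [show ((1:ℝ) - 1/((c:ℝ)+1))⁻¹ = 1 / (1 - 1/((c:ℝ)+1)) from (one_div _).symm]
        exact h6
      have h7 : (1 - 1/((c:ℝ)+1))⁻¹ = ((c:ℝ)+1)/c := by
        rw [show (1 : ℝ) - 1/((c:ℝ)+1) = (c:ℝ)/((c:ℝ)+1) by field_simp; ring, inv_div]
      have h2 : Real.exp (1/((c:ℝ)+1)) ≤ ((c:ℝ)+1)/c := h7 ▸ h5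
      have key : Real.exp 1 * (c:ℝ)^(c+1) ≤ ((c:ℝ)+1)^(c+1) := by
        have h8 : Real.exp 1 = (Real.exp (1/((c:ℝ)+1)))^(c+1) := by
          rw [← Real.exp_nat_mul]; congr 1; push_cast; field_simp
        calc Real.exp 1 * (c:ℝ)^(c+1) = (Real.exp (1/((c:ℝ)+1)))^(c+1) * (c:ℝ)^(c+1) := by
              rw [h8]
          _ ≤ (((c:ℝ)+1)/c)^(c+1) * (c:ℝ)^(c+1) := by
              apply mul_le_mul_of_nonneg_right _ (by positivity)
              apply pow_le_pow_left₀ (Real.exp_nonneg _) h2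
          _ = (((c:ℝ)+1)/c * c)^(c+1) := by rw [mul_pow]
          _ = ((c:ℝ)+1)^(c+1) := by rw [div_mul_cancel₀ _ (ne_of_gt hc')]
      have ihc := ih h
      have hcast : ((c+1:ℕ):ℝ) = (c:ℝ)+1 := by push_cast; ring
      rw [hcast]
      calc ((c+1).factorial : ℝ) * Real.exp ((c:ℝ)+1)
          = ((c:ℝ)+1) * ((c.factorial : ℝ) * Real.exp c) * Real.exp 1 := by
            rw [Nat.factorial_succ, Real.exp_add]; push_cast; ring
        _ ≤ ((c:ℝ)+1) * (Real.exp 1 * (c:ℝ)^(c+1)) * Real.exp 1 := by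
            have : (0:ℝ) ≤ (c:ℝ)+1 := by positivity
            gcongr
        _ ≤ ((c:ℝ)+1) * ((c:ℝ)+1)^(c+1) * Real.exp 1 := by
            have := Real.exp_pos 1
            gcongr
        _ = Real.exp 1 * ((c:ℝ)+1)^(c+2) := by ring

lemma exp_entropy_mul_factorials_le (c : Fin (k + 1) → ℕ) (hc : ∑ j, c j = n) (hn : 0 < n) :
    Real.exp ((n : ℝ) * entropy (fun j => (c j : ℝ) / n)) * ∏ j, ((c j).factorial : ℝ) ≤
      (Real.exp 1 * n) ^ (k + 1) * (n.factorial : ℝ) := by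
  classical
  set F := univ.filter (fun j => c j ≠ 0) with hF
  have hn' : (0:ℝ) < n := by exact_mod_cast hn
  have hsumF : ∑ j ∈ F, c j = n := by
    rw [← hc]
    exact Finset.sum_filter_ne_zero _
  have hprodfact : ∏ j, ((c j).factorial : ℝ) = ∏ j ∈ F, ((c j).factorial : ℝ) := by
    symm
    apply Finset.prod_subset (Finset.filter_subset _ _)
    intro j _ hj
    simp only [hF, mem_filter, mem_univ, true_and, not_not] at hj
    rw [hj]; simp
  rw [exp_n_entropy c hn, hprodfact, ← Finset.prod_mul_distrib]
  have hbound : ∀ j ∈ F, ((n : ℝ) / c j) ^ c j * ((c j).factorial : ℝ) ≤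
      (Real.exp 1 * n) * ((n : ℝ) ^ c j * Real.exp (-(c j : ℝ))) := by
    intro j hj
    simp only [hF, mem_filter] at hj
    have hcj : 0 < c j := Nat.pos_of_ne_zero hj.2
    have hcj' : (0:ℝ) < c j := by exact_mod_cast hcj
    have hcjn : (c j : ℝ) ≤ n := by
      exact_mod_cast (Finset.single_le_sum (f := c) (fun _ _ => Nat.zero_le _) (mem_univ j)).trans_eq hc
    have hfac := factorial_le_aux (c j) hcj
    have hfac2 : ((c j).factorial : ℝ) ≤ Real.exp 1 * (c j : ℝ) ^ (c j + 1) * Real.exp (-(c j : ℝ)) := by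
      rw [Real.exp_neg, ← div_eq_mul_inv]
      exact (le_div_iff₀ (Real.exp_pos _)).2 hfac
    calc ((n : ℝ) / c j) ^ c j * ((c j).factorial : ℝ)
        ≤ ((n : ℝ) / c j) ^ c j * (Real.exp 1 * (c j : ℝ) ^ (c j + 1) * Real.exp (-(c j : ℝ))) := by
          apply mul_le_mul_of_nonneg_left hfac2 (by positivity)
      _ = Real.exp 1 * (((n : ℝ) / c j) ^ c j * (c j : ℝ) ^ (c j)) * (c j : ℝ) * Real.exp (-(c j : ℝ)) := by
          rw [pow_succ]; ring
      _ = Real.exp 1 * (n : ℝ) ^ c j * (c j : ℝ) * Real.exp (-(c j : ℝ)) := by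
          rw [← mul_pow, div_mul_cancel₀ _ (ne_of_gt hcj')]
      _ ≤ Real.exp 1 * (n : ℝ) ^ c j * (n : ℝ) * Real.exp (-(c j : ℝ)) := by
          have := Real.exp_pos (-(c j : ℝ))
          gcongr
      _ = (Real.exp 1 * n) * ((n : ℝ) ^ c j * Real.exp (-(c j : ℝ))) := by ring
  calc ∏ j ∈ F, (((n : ℝ) / c j) ^ c j * ((c j).factorial : ℝ))
      ≤ ∏ j ∈ F, ((Real.exp 1 * n) * ((n : ℝ) ^ c j * Real.exp (-(c j : ℝ)))) := by
        apply Finset.prod_le_prod _ hbound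
        intro j hj
        positivity
    _ = (Real.exp 1 * n) ^ F.card * ((n:ℝ) ^ (∑ j ∈ F, c j) * Real.exp (∑ j ∈ F, -(c j : ℝ))) := by
        rw [Finset.prod_mul_distrib, Finset.prod_const, Finset.prod_mul_distrib,
          Finset.prod_pow_eq_pow_sum, ← Real.exp_sum]
    _ = (Real.exp 1 * n) ^ F.card * ((n:ℝ) ^ n * Real.exp (-(n:ℝ))) := by
        rw [hsumF]
        congr 2
        rw [Finset.sum_neg_distrib, ← Nat.cast_sum, hsumF]
    _ ≤ (Real.exp 1 * n) ^ (k + 1) * ((n:ℝ) ^ n * Real.exp (-(n:ℝ))) := by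
        have h1 : (1:ℝ) ≤ Real.exp 1 * n := by
          have : (1:ℝ) ≤ (n:ℝ) := by exact_mod_cast hn
          nlinarith [Real.one_le_exp (le_of_lt one_pos)]
        apply mul_le_mul_of_nonneg_right _ (by positivity)
        apply pow_le_pow_right₀ h1
        calc F.card ≤ (univ : Finset (Fin (k+1))).card := Finset.card_filter_le _ _
          _ = k + 1 := by simp
    _ ≤ (Real.exp 1 * n) ^ (k + 1) * (n.factorial : ℝ) := by
        apply mul_le_mul_of_nonneg_left _ (by positivity)
        rw [Real.exp_neg, ← div_eq_mul_inv, div_le_iff₀ (Real.exp_pos _)]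
        exact (pow_self_le_exp_mul_factorial n).trans_eq (mul_comm _ _)


lemma exists_state_with_counts (c : Fin (k + 1) → ℕ) (hc : ∑ j, c j = n) :
    ∃ f : Fin n → Fin (k + 1), ∀ j, countsOf f j = c j := by
  classical
  set c' : ℕ → ℕ := fun l => if h : l < k + 1 then c ⟨l, h⟩ else 0 with hc'
  set P : ℕ → ℕ := fun t => ∑ l ∈ range t, c' l with hP
  have hPmono : Monotone P := by
    intro a b hab
    exact Finset.sum_le_sum_of_subset (Finset.range_subset_range.2 hab)
  have hPtop : P (k + 1) = n := by
    show ∑ l ∈ range (k + 1), c' l = n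
    rw [← hc, ← Fin.sum_univ_eq_sum_range (fun l => c' l) (k+1)]
    apply Finset.sum_congr rfl
    intro j _
    simp [hc']; intro h; exact absurd j.isLt (by omega)
  have hcov : ∀ i : ℕ, i < n → ∃ j : Fin (k + 1), P j ≤ i ∧ i < P ((j : ℕ) + 1) := by
    intro i hi
    set S := (range (k + 1)).filter (fun j' => P j' ≤ i) with hS
    have hS0 : (0 : ℕ) ∈ S := by
      simp [hS, hP]
    have hSne : S.Nonempty := ⟨0, hS0⟩
    set jm := S.max' hSne with hjm
    have hjmS : jm ∈ S := S.max'_mem hSne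
    simp only [hS, mem_filter, mem_range] at hjmS
    refine ⟨⟨jm, hjmS.1⟩, hjmS.2, ?_⟩
    simp only
    by_cases hjk : jm + 1 < k + 1
    · by_contra hcon
      push_neg at hcon
      have : jm + 1 ∈ S := by simp [hS, mem_filter, mem_range, hjk, hcon]
      have := S.le_max' _ this
      omega
    · have : jm = k := by omega
      rw [this, hPtop]
      exact hi
  set f : Fin n → Fin (k + 1) := fun i =>
    (hcov i i.isLt).choose with hf
  have hfspec : ∀ i : Fin n, P (f i) ≤ i ∧ (i : ℕ) < P ((f i : ℕ) + 1) :=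
    fun i => (hcov i i.isLt).choose_spec
  have huniq : ∀ (i : Fin n) (j : Fin (k + 1)), P j ≤ i → (i : ℕ) < P ((j : ℕ) + 1) → f i = j := by
    intro i j h1 h2
    have h3 := hfspec i
    by_contra hne
    rcases lt_or_gt_of_ne (fun h => hne (Fin.ext h)) with h | h
    · have : P ((f i : ℕ) + 1) ≤ P j := hPmono (by omega)
      omega
    · have : P ((j : ℕ) + 1) ≤ P (f i) := hPmono (by omega)
      omega
  refine ⟨f, fun j => ?_⟩
  have hiff : ∀ i : Fin n, f i = j ↔ (P j ≤ i ∧ (i : ℕ) < P ((j : ℕ) + 1)) := by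
    intro i
    constructor
    · intro h
      rw [← h]; exact hfspec i
    · intro ⟨h1, h2⟩; exact huniq i j h1 h2
  unfold countsOf
  rw [Finset.filter_congr (fun i _ => by rw [hiff i])]
  have hPj1 : P ((j : ℕ) + 1) ≤ n := by
    rw [← hPtop]; exact hPmono (by omega)
  have : #(univ.filter (fun i : Fin n => P j ≤ (i : ℕ) ∧ (i : ℕ) < P ((j : ℕ) + 1)))
      = #(Finset.Ico (P j) (P ((j : ℕ) + 1))) := by
    apply Finset.card_bij (fun (i : Fin n) (_ : i ∈ univ.filter (fun i : Fin n => P j ≤ (i : ℕ) ∧ (i : ℕ) < P ((j : ℕ) + 1))) => (i : ℕ))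
    · intro a ha
      simp only [mem_filter, mem_univ, true_and] at ha
      exact Finset.mem_Ico.2 ha
    · intro a _ b _ h
      exact Fin.ext h
    · intro b hb
      rw [Finset.mem_Ico] at hb
      exact ⟨⟨b, lt_of_lt_of_le hb.2 hPj1⟩, by simp [hb.1, hb.2], rfl⟩
  rw [this, Nat.card_Ico]
  show (∑ l ∈ range ((j:ℕ) + 1), c' l) - (∑ l ∈ range (j:ℕ), c' l) = c j
  rw [Finset.sum_range_succ]
  simp only [add_tsub_cancel_left]
  simp [hc']; intro h; exact absurd j.isLt (by omega)

lemma factorial_le_prodfact_mul_card (c : Fin (k + 1) → ℕ) (hc : ∑ j, c j = n)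
    (M : ℕ) (hM : ∑ j : Fin (k + 1), (j : ℕ) * c j = M) :
    n.factorial ≤ (∏ j, (c j).factorial) *
      #(univ.filter (fun s : Fin n → Fin (k + 1) => ∑ i, (s i : ℕ) = M)) := by
  classical
  obtain ⟨f, hf⟩ := exists_state_with_counts c hc
  set Φ : Equiv.Perm (Fin n) → (Fin n → Fin (k + 1)) := fun σ => f ∘ σ with hΦ
  have hcard : #(univ : Finset (Equiv.Perm (Fin n))) = n.factorial := by
    simp [Fintype.card_perm]
  have himagecounts : ∀ s ∈ Finset.image Φ univ, countsOf s = c := by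
    intro s hs
    rw [Finset.mem_image] at hs
    obtain ⟨σ, _, rfl⟩ := hs
    funext j
    rw [hΦ]
    simp only
    rw [show f ∘ ⇑σ = f ∘ ⇑σ from rfl]
    rw [congrFun (countsOf_comp_perm f σ) j]
    exact hf j
  have hfiber : ∀ s ∈ Finset.image Φ univ,
      #(univ.filter (fun σ : Equiv.Perm (Fin n) => Φ σ = s)) ≤ ∏ j, (c j).factorial := by
    intro s hs
    have hsc : countsOf s = c := himagecounts s hs
    -- inject into Π j, (fiber_j s ↪ fiber_j f)
    set T := ∀ j : Fin (k + 1), ((↥(univ.filter (fun i : Fin n => s i = j))) ↪ (↥(univ.filter (fun i : Fin n => f i = j)))) with hT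
    have hcardT : Fintype.card T = ∏ j, (c j).factorial := by
      rw [Fintype.card_pi]
      refine Finset.prod_congr rfl fun j _ => ?_
      rw [Fintype.card_embedding_eq]
      simp only [Fintype.card_coe]
      rw [show #(filter (fun i : Fin n => s i = j) univ) = c j from congrFun hsc j,
        show #(filter (fun i : Fin n => f i = j) univ) = c j from hf j,
        Nat.descFactorial_self]
    have hcards : ∀ j : Fin (k + 1),
        Fintype.card (↥(univ.filter (fun i : Fin n => s i = j))) =
        Fintype.card (↥(univ.filter (fun i : Fin n => f i = j))) := by
      intro j
      simp only [Fintype.card_coe]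
      rw [show #(filter (fun i : Fin n => s i = j) univ) = c j from congrFun hsc j,
        show #(filter (fun i : Fin n => f i = j) univ) = c j from hf j]
    set ψ : Equiv.Perm (Fin n) → T := fun σ =>
      if hσ : Φ σ = s then
        (fun j => ⟨fun i => ⟨σ i.1, by
            have hi := i.2
            simp only [mem_filter, mem_univ, true_and] at hi ⊢
            exact (congrFun hσ i.1).trans hi⟩,
          fun a b hab => Subtype.ext (σ.injective (congrArg Subtype.val hab))⟩)
      else (fun j => (Fintype.equivOfCardEq (hcards j)).toEmbedding) with hψ
    calc #(univ.filter (fun σ : Equiv.Perm (Fin n) => Φ σ = s))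
        ≤ #(univ : Finset T) := by
          apply Finset.card_le_card_of_injOn ψ (fun _ _ => mem_univ _)
          intro σ hσm τ hτm hst
          simp only [coe_filter, Set.mem_setOf_eq] at hσm hτm
          have hσ1 : Φ σ = s := hσm.2
          have hτ1 : Φ τ = s := hτm.2
          rw [hψ] at hst
          simp only [dif_pos hσ1, dif_pos hτ1] at hst
          apply Equiv.ext
          intro i
          have hmem : i ∈ univ.filter (fun i' : Fin n => s i' = s i) := by
            simp
          have := congrFun hst (s i)
          have h2 := congrArg (fun (e : _ ↪ _) => (e ⟨i, hmem⟩ : ↥(univ.filter (fun i' : Fin n => f i' = s i))).1) this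
          exact h2
      _ = ∏ j, (c j).factorial := by
          rw [Finset.card_univ, hcardT]
  calc n.factorial = #(univ : Finset (Equiv.Perm (Fin n))) := hcard.symm
    _ ≤ (∏ j, (c j).factorial) * #(Finset.image Φ univ) :=
        Finset.card_le_mul_card_image univ _ hfiber
    _ ≤ (∏ j, (c j).factorial) *
        #(univ.filter (fun s : Fin n → Fin (k + 1) => ∑ i, (s i : ℕ) = M)) := by
        apply Nat.mul_le_mul_left
        apply Finset.card_le_card
        intro s hs
        rw [Finset.mem_filter]
        refine ⟨mem_univ s, ?_⟩
        rw [sum_val_eq_sum_counts s, ← hM]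
        refine Finset.sum_congr rfl fun j _ => ?_
        rw [congrFun (himagecounts s hs) j]

lemma entropy_eq_sum_negMulLog (d : Fin (k + 1) → ℝ) :
    entropy d = ∑ j, Real.negMulLog (d j) := by
  classical
  unfold entropy
  rw [← Finset.sum_neg_distrib]
  rw [Finset.sum_subset (Finset.filter_subset _ _)]
  · exact Finset.sum_congr rfl fun j _ => by rw [Real.negMulLog, neg_mul]
  · intro j _ hj
    simp only [mem_filter, mem_univ, true_and, not_not] at hj
    rw [hj]; simp

lemma continuous_entropy : Continuous (entropy (k := k)) := by
  have : (entropy (k := k)) = fun d => ∑ j, Real.negMulLog (d j) := by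
    funext d; exact entropy_eq_sum_negMulLog d
  rw [this]
  exact continuous_finset_sum _ fun j _ =>
    Real.continuous_negMulLog.comp (continuous_apply j)

lemma isClosed_DeltaKM (m : ℝ) : IsClosed (DeltaKM k m) := by
  have h1 : IsClosed {d : Fin (k + 1) → ℝ | ∀ j, 0 ≤ d j} := by
    rw [Set.setOf_forall]
    exact isClosed_iInter fun j => isClosed_le continuous_const (continuous_apply j)
  have h2 : IsClosed {d : Fin (k + 1) → ℝ | ∑ j, d j = 1} :=
    isClosed_eq (continuous_finset_sum _ fun j _ => continuous_apply j) continuous_const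
  have h3 : IsClosed {d : Fin (k + 1) → ℝ | ∑ j : Fin (k + 1), ((j : ℕ) : ℝ) * d j = m} :=
    isClosed_eq (continuous_finset_sum _ fun j _ => (continuous_const.mul (continuous_apply j)))
      continuous_const
  have : DeltaKM k m = {d : Fin (k + 1) → ℝ | ∀ j, 0 ≤ d j} ∩
      ({d | ∑ j, d j = 1} ∩ {d | ∑ j : Fin (k + 1), ((j : ℕ) : ℝ) * d j = m}) := by
    ext d; simp [DeltaKM, Set.mem_inter_iff, and_assoc]
  rw [this]
  exact h1.inter (h2.inter h3)

lemma exists_delta (m : ℝ) (dstar : Fin (k + 1) → ℝ) (hdstar : dstar ∈ DeltaKM k m)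
    (hmax : ∀ d ∈ DeltaKM k m, d ≠ dstar → entropy d < entropy dstar)
    (ε : ℝ) (hε : 0 < ε) :
    ∃ δ, 0 < δ ∧ ∀ d ∈ DeltaKM k m, ε ≤ ∑ j, (d j - dstar j) ^ 2 →
      entropy d ≤ entropy dstar - δ := by
  classical
  set K : Set (Fin (k + 1) → ℝ) :=
    DeltaKM k m ∩ {d | ε ≤ ∑ j, (d j - dstar j) ^ 2} with hK
  have hKclosed : IsClosed K := by
    apply (isClosed_DeltaKM m).inter
    exact isClosed_le continuous_const
      (continuous_finset_sum _ fun j _ => ((continuous_apply j).sub continuous_const).pow 2)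
  have hKsub : K ⊆ Set.Icc (fun _ => (0:ℝ)) (fun _ => (1:ℝ)) := by
    intro d hd
    obtain ⟨⟨hpos, hsum, _⟩, _⟩ := hd
    constructor
    · intro j; exact hpos j
    · intro j
      calc d j ≤ ∑ j', d j' := Finset.single_le_sum (fun j' _ => hpos j') (mem_univ j)
        _ = 1 := hsum
  have hKcompact : IsCompact K :=
    IsCompact.of_isClosed_subset isCompact_Icc hKclosed hKsub
  rcases Set.eq_empty_or_nonempty K with hKe | hKne
  · refine ⟨1, one_pos, fun d hd1 hd2 => ?_⟩
    have hmem : d ∈ K := Set.mem_inter hd1 (by exact hd2)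
    rw [hKe] at hmem
    exact absurd hmem (Set.notMem_empty d)
  · obtain ⟨d0, hd0K, hd0max⟩ := hKcompact.exists_isMaxOn hKne continuous_entropy.continuousOn
    have hd0ne : d0 ≠ dstar := by
      intro h
      have := hd0K.2
      rw [h] at this
      simp only [Set.mem_setOf_eq, sub_self] at this
      have : ε ≤ 0 := by simpa using this
      linarith
    have hlt : entropy d0 < entropy dstar := hmax d0 hd0K.1 hd0ne
    refine ⟨entropy dstar - entropy d0, by linarith, fun d hd1 hd2 => ?_⟩
    have : entropy d ≤ entropy d0 := hd0max (Set.mem_inter hd1 hd2)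
    linarith

lemma exists_eta (dstar : Fin (k + 1) → ℝ) (δ' : ℝ) (hδ' : 0 < δ') :
    ∃ η, 0 < η ∧ ∀ d : Fin (k + 1) → ℝ, (∀ j, |d j - dstar j| ≤ η) →
      entropy dstar - δ' < entropy d := by
  have hcont : ContinuousAt (entropy (k := k)) dstar := continuous_entropy.continuousAt
  rw [Metric.continuousAt_iff] at hcont
  obtain ⟨θ, hθ, hθ'⟩ := hcont δ' hδ'
  refine ⟨θ/2, by linarith, fun d hd => ?_⟩
  have hdist : dist d dstar ≤ θ/2 := by
    rw [dist_pi_le_iff (by linarith)]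
    intro j
    rw [Real.dist_eq]
    exact hd j
  have := hθ' (lt_of_le_of_lt hdist (by linarith))
  rw [Real.dist_eq, abs_lt] at this
  linarith

lemma sum_ite_single (v : ℕ) (hv : v < k + 1) (X : ℕ) :
    (∑ j : Fin (k + 1), if (j : ℕ) = v then X else 0) = X := by
  rw [Finset.sum_eq_single (⟨v, hv⟩ : Fin (k + 1))]
  · simp
  · intro b _ hb
    rw [if_neg]
    intro h
    exact hb (Fin.ext h)
  · intro h; exact absurd (mem_univ _) h

lemma sum_mul_ite_single (v : ℕ) (hv : v < k + 1) (X : ℕ) :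
    (∑ j : Fin (k + 1), (j : ℕ) * if (j : ℕ) = v then X else 0) = v * X := by
  rw [Finset.sum_eq_single (⟨v, hv⟩ : Fin (k + 1))]
  · simp
  · intro b _ hb
    rw [if_neg, mul_zero]
    intro h
    exact hb (Fin.ext h)
  · intro h; exact absurd (mem_univ _) h

lemma exists_good_counts (hk : 1 ≤ k) (m : ℝ) (d : Fin (k + 1) → ℝ) (hd : d ∈ DeltaKM k m)
    (n M : ℕ) (hn : 0 < n) (hM : (M : ℝ) = m * n) :
    ∃ c : Fin (k + 1) → ℕ, (∑ j, c j = n) ∧ (∑ j : Fin (k + 1), (j : ℕ) * c j = M) ∧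
      (∀ j, |(c j : ℝ) / n - d j| ≤ (k + 3) / n) := by
  classical
  obtain ⟨hpos, hsum, hmean⟩ := hd
  have hn' : (0:ℝ) < n := by exact_mod_cast hn
  set fl : Fin (k + 1) → ℕ := fun j => ⌊(n : ℝ) * d j⌋₊ with hfl
  have hfl_le : ∀ j, (fl j : ℝ) ≤ (n:ℝ) * d j := fun j => Nat.floor_le (mul_nonneg (Nat.cast_nonneg n) (hpos j))
  have hfl_gt : ∀ j, (n:ℝ) * d j < (fl j : ℝ) + 1 := fun j => Nat.lt_floor_add_one _
  have hslr : (∑ j, (fl j : ℝ)) ≤ n := by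
    calc ∑ j, (fl j : ℝ) ≤ ∑ j, (n:ℝ) * d j := Finset.sum_le_sum fun j _ => hfl_le j
      _ = (n:ℝ) * ∑ j, d j := by rw [Finset.mul_sum]
      _ = n := by rw [hsum, mul_one]
  have hsn : ∑ j, fl j ≤ n := by
    have : ((∑ j, fl j : ℕ) : ℝ) ≤ (n : ℝ) := by rw [Nat.cast_sum]; exact hslr
    exact_mod_cast this
  set r : ℕ := n - ∑ j, fl j with hrdef
  have hr : (r : ℝ) = (n:ℝ) - ∑ j, (fl j : ℝ) := by
    rw [hrdef, Nat.cast_sub hsn, Nat.cast_sum]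
  have hwlr : (∑ j : Fin (k+1), ((j:ℕ) : ℝ) * fl j) ≤ M := by
    calc ∑ j : Fin (k+1), ((j:ℕ):ℝ) * fl j ≤ ∑ j : Fin (k+1), ((j:ℕ):ℝ) * ((n:ℝ) * d j) := by
          apply Finset.sum_le_sum
          intro j _
          exact mul_le_mul_of_nonneg_left (hfl_le j) (Nat.cast_nonneg _)
      _ = (n:ℝ) * ∑ j : Fin (k+1), ((j:ℕ):ℝ) * d j := by rw [Finset.mul_sum]; congr 1; funext j; ring
      _ = (n:ℝ) * m := by rw [hmean]
      _ = M := by rw [hM]; ring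
  have hwn : ∑ j : Fin (k+1), (j:ℕ) * fl j ≤ M := by
    have : ((∑ j : Fin (k+1), (j:ℕ) * fl j : ℕ) : ℝ) ≤ (M : ℝ) := by
      rw [Nat.cast_sum]
      calc ∑ j : Fin (k+1), (((j:ℕ) * fl j : ℕ) : ℝ) = ∑ j : Fin (k+1), ((j:ℕ):ℝ) * fl j := by
            apply Finset.sum_congr rfl; intro j _; push_cast; ring
        _ ≤ M := hwlr
    exact_mod_cast this
  set t : ℕ := M - ∑ j : Fin (k+1), (j:ℕ) * fl j with htdef
  have ht : (t : ℝ) = (M:ℝ) - ∑ j : Fin (k+1), ((j:ℕ):ℝ) * fl j := by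
    rw [htdef, Nat.cast_sub hwn, Nat.cast_sum]
    congr 1
    apply Finset.sum_congr rfl; intro j _; push_cast; ring
  have htkr : (t : ℝ) ≤ (k:ℝ) * r := by
    have hMsum : (M : ℝ) = ∑ j : Fin (k+1), ((j:ℕ):ℝ) * ((n:ℝ) * d j) := by
      rw [hM, ← hmean, Finset.sum_mul]
      apply Finset.sum_congr rfl; intro j _; ring
    rw [ht, hMsum, ← Finset.sum_sub_distrib]
    have : ∀ j : Fin (k+1), ((j:ℕ):ℝ) * ((n:ℝ) * d j) - ((j:ℕ):ℝ) * fl j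
        = ((j:ℕ):ℝ) * ((n:ℝ) * d j - fl j) := fun j => by ring
    rw [Finset.sum_congr rfl (fun j _ => this j)]
    calc ∑ j : Fin (k+1), ((j:ℕ):ℝ) * ((n:ℝ) * d j - fl j)
        ≤ ∑ j : Fin (k+1), (k:ℝ) * ((n:ℝ) * d j - fl j) := by
          apply Finset.sum_le_sum
          intro j _
          apply mul_le_mul_of_nonneg_right _ (by linarith [hfl_le j])
          exact_mod_cast Nat.lt_succ_iff.mp j.isLt
      _ = (k:ℝ) * ((n:ℝ) - ∑ j, (fl j:ℝ)) := by
          rw [← Finset.mul_sum, Finset.sum_sub_distrib]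
          congr 2
          rw [← Finset.mul_sum, hsum, mul_one]
      _ = (k:ℝ) * r := by rw [hr]
  have htkrn : t ≤ k * r := by exact_mod_cast htkr
  set a : ℕ := t / k with hadef
  set b : ℕ := t % k with hbdef
  have hk0 : 0 < k := hk
  have hab : k * a + b = t := Nat.div_add_mod t k
  have hblt : b < k := Nat.mod_lt _ hk0
  have ha : a ≤ r := by
    rw [hadef]
    calc t / k ≤ (k * r) / k := Nat.div_le_div_right htkrn
      _ = r := Nat.mul_div_cancel_left r hk0
  have hextra_le : a + (if b = 0 then 0 else 1) ≤ r := by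
    by_cases hb0 : b = 0
    · simp [hb0, ha]
    · simp only [if_neg hb0]
      have h1 : k * a < t := by omega
      have h2 : k * a < k * r := lt_of_lt_of_le h1 htkrn
      have : a < r := lt_of_mul_lt_mul_left h2 (Nat.zero_le k)
      omega
  set ib : ℕ := if b = 0 then 0 else 1 with hib
  set extra : Fin (k + 1) → ℕ := fun j =>
    (if (j : ℕ) = 0 then r - (a + ib) else 0) + (if (j : ℕ) = k then a else 0) +
      (if (j : ℕ) = b ∧ b ≠ 0 then 1 else 0) with hextradef
  have hrk : r ≤ k := by
    have hlt : (r : ℝ) < (k:ℝ) + 1 := by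
      rw [hr]
      have : (n:ℝ) - ∑ j, (fl j : ℝ) = ∑ j : Fin (k+1), ((n:ℝ) * d j - fl j) := by
        rw [Finset.sum_sub_distrib]
        congr 1
        rw [← Finset.mul_sum, hsum, mul_one]
      rw [this]
      calc ∑ j : Fin (k+1), ((n:ℝ) * d j - fl j) < ∑ j : Fin (k+1), (1:ℝ) := by
            apply Finset.sum_lt_sum_of_nonempty ⟨0, mem_univ 0⟩
            intro j _
            linarith [hfl_gt j]
        _ = (k:ℝ) + 1 := by simp
    have h2 : r < k + 1 := by exact_mod_cast (show (r:ℝ) < ((k+1 : ℕ):ℝ) by push_cast; linarith)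
    omega
  set c : Fin (k + 1) → ℕ := fun j => fl j + extra j with hcdef
  have hsum_e1 : (∑ j : Fin (k+1), if (j:ℕ) = 0 then r - (a + ib) else 0) = r - (a + ib) :=
    sum_ite_single 0 (by omega) _
  have hsum_e2 : (∑ j : Fin (k+1), if (j:ℕ) = k then a else 0) = a :=
    sum_ite_single k (by omega) _
  have hsum_e3 : (∑ j : Fin (k+1), if (j:ℕ) = b ∧ b ≠ 0 then 1 else 0) = ib := by
    by_cases hb0 : b = 0
    · rw [hib, if_pos hb0]
      apply Finset.sum_eq_zero
      intro j _
      rw [if_neg]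
      rintro ⟨_, h⟩
      exact h hb0
    · rw [hib, if_neg hb0]
      have heq : ∀ j : Fin (k+1), (if (j:ℕ) = b ∧ b ≠ 0 then 1 else 0)
          = (if (j:ℕ) = b then 1 else 0) := fun j => by simp [hb0]
      rw [Finset.sum_congr rfl (fun j _ => heq j)]
      exact sum_ite_single b (by omega) 1
  have hsum_extra : ∑ j, extra j = r := by
    rw [hextradef]
    simp only []
    rw [Finset.sum_add_distrib, Finset.sum_add_distrib, hsum_e1, hsum_e2, hsum_e3]
    omega
  have hwsum_e1 : (∑ j : Fin (k+1), (j:ℕ) * if (j:ℕ) = 0 then r - (a + ib) else 0) = 0 := by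
    rw [sum_mul_ite_single 0 (by omega)]; ring
  have hwsum_e2 : (∑ j : Fin (k+1), (j:ℕ) * if (j:ℕ) = k then a else 0) = k * a :=
    sum_mul_ite_single k (by omega) a
  have hwsum_e3 : (∑ j : Fin (k+1), (j:ℕ) * if (j:ℕ) = b ∧ b ≠ 0 then 1 else 0) = b * ib := by
    by_cases hb0 : b = 0
    · rw [hib, if_pos hb0]
      rw [Finset.sum_eq_zero, hb0]
      · ring
      · intro j _
        rw [if_neg, mul_zero]
        rintro ⟨_, h⟩
        exact h hb0
    · rw [hib, if_neg hb0]
      have heq : ∀ j : Fin (k+1), ((j:ℕ) * if (j:ℕ) = b ∧ b ≠ 0 then 1 else 0)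
          = ((j:ℕ) * if (j:ℕ) = b then 1 else 0) := fun j => by simp [hb0]
      rw [Finset.sum_congr rfl (fun j _ => heq j)]
      exact sum_mul_ite_single b (by omega) 1
  have hwsum_extra : ∑ j : Fin (k+1), (j:ℕ) * extra j = t := by
    rw [hextradef]
    simp only []
    have heq : ∀ j : Fin (k+1),
        (j:ℕ) * ((if (j : ℕ) = 0 then r - (a + ib) else 0) + (if (j : ℕ) = k then a else 0) +
          (if (j : ℕ) = b ∧ b ≠ 0 then 1 else 0))
        = (j:ℕ) * (if (j : ℕ) = 0 then r - (a + ib) else 0)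
          + (j:ℕ) * (if (j : ℕ) = k then a else 0)
          + (j:ℕ) * (if (j : ℕ) = b ∧ b ≠ 0 then 1 else 0) := fun j => by ring
    rw [Finset.sum_congr rfl (fun j _ => heq j), Finset.sum_add_distrib, Finset.sum_add_distrib,
      hwsum_e1, hwsum_e2, hwsum_e3]
    by_cases hb0 : b = 0
    · rw [hib] ; simp [hb0] ; omega
    · rw [hib] ; simp only [if_neg hb0] ; omega
  have hcsum : ∑ j, c j = n := by
    rw [hcdef]
    simp only []
    rw [Finset.sum_add_distrib, hsum_extra]
    omega
  have hwcsum : ∑ j : Fin (k+1), (j:ℕ) * c j = M := by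
    rw [hcdef]
    simp only []
    have heq : ∀ j : Fin (k+1), (j:ℕ) * (fl j + extra j)
        = (j:ℕ) * fl j + (j:ℕ) * extra j := fun j => by ring
    rw [Finset.sum_congr rfl (fun j _ => heq j), Finset.sum_add_distrib, hwsum_extra]
    omega
  refine ⟨c, hcsum, hwcsum, ?_⟩
  intro j
  have hextra_bd : extra j ≤ r + 1 := by
    rw [hextradef]
    simp only []
    have h1 : (if (j:ℕ) = 0 then r - (a + ib) else 0) ≤ r - (a + ib) := by split <;> omega
    have h2 : (if (j:ℕ) = k then a else 0) ≤ a := by split <;> omega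
    have h3 : (if (j:ℕ) = b ∧ b ≠ 0 then 1 else 0) ≤ 1 := by split <;> omega
    omega
  have hcj_up : (c j : ℝ) ≤ (n:ℝ) * d j + ((k:ℝ) + 3) := by
    have h1 : (c j : ℝ) = (fl j : ℝ) + (extra j : ℝ) := by rw [hcdef]; push_cast; ring
    have h2 : (extra j : ℝ) ≤ (r : ℝ) + 1 := by exact_mod_cast hextra_bd
    have h3 : (r : ℝ) ≤ (k : ℝ) := by exact_mod_cast hrk
    linarith [hfl_le j]
  have hcj_down : (n:ℝ) * d j - ((k:ℝ) + 3) ≤ (c j : ℝ) := by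
    have h1 : (fl j : ℝ) ≤ (c j : ℝ) := by
      have : fl j ≤ c j := Nat.le_add_right _ _
      exact_mod_cast this
    linarith [hfl_gt j]
  have habs : |(c j : ℝ) - (n:ℝ) * d j| ≤ (k:ℝ) + 3 := by
    rw [abs_le]
    constructor <;> linarith
  have heq2 : (c j : ℝ) / n - d j = ((c j : ℝ) - (n:ℝ) * d j) / n := by
    field_simp
  rw [heq2, abs_div, abs_of_pos hn']
  gcongr

lemma eventually_poly_lt_exp (δ ε : ℝ) (hδ : 0 < δ) (hε : 0 < ε) (d : ℕ) :
    ∃ N : ℕ, ∀ n : ℕ, N ≤ n →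
      ((n:ℝ)+1)^d * (Real.exp 1 * n)^d < ε * Real.exp (δ * n) := by
  have h0 : Tendsto (fun x : ℝ => x ^ ((2*d : ℕ):ℝ) * Real.exp (-δ * x)) atTop (nhds 0) :=
    tendsto_rpow_mul_exp_neg_mul_atTop_nhds_zero _ δ hδ
  have h1 : Tendsto (fun x : ℝ => Real.exp 1 ^ d * Real.exp δ *
      (x ^ ((2*d:ℕ):ℝ) * Real.exp (-δ * x))) atTop (nhds 0) := by
    have := h0.const_mul (Real.exp 1 ^ d * Real.exp δ)
    simpa using this
  have h2 : Tendsto (fun n : ℕ => ((n:ℝ)+1)) atTop atTop :=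
    tendsto_atTop_add_const_right _ 1 tendsto_natCast_atTop_atTop
  have h3 := h1.comp h2
  have h4 : ∀ᶠ n : ℕ in atTop, (Real.exp 1 ^ d * Real.exp δ *
      ((((n:ℝ)+1)) ^ ((2*d:ℕ):ℝ) * Real.exp (-δ * ((n:ℝ)+1)))) < ε := by
    have := h3.eventually_lt_const hε
    exact this
  rw [Filter.eventually_atTop] at h4
  obtain ⟨N, hN⟩ := h4
  refine ⟨N, fun n hn => ?_⟩
  have hkey := hN n hn
  have hn1 : (0:ℝ) ≤ (n:ℝ) := Nat.cast_nonneg n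
  have hrpow : (((n:ℝ)+1)) ^ ((2*d:ℕ):ℝ) = ((n:ℝ)+1) ^ (2*d) := by
    rw [Real.rpow_natCast]
  have hbound : ((n:ℝ)+1)^d * (Real.exp 1 * n)^d ≤ Real.exp 1 ^ d * ((n:ℝ)+1) ^ (2*d) := by
    calc ((n:ℝ)+1)^d * (Real.exp 1 * n)^d = Real.exp 1 ^ d * (((n:ℝ)+1) * n)^d := by
          rw [mul_pow, mul_pow]; ring
      _ ≤ Real.exp 1 ^ d * (((n:ℝ)+1) * ((n:ℝ)+1))^d := by
          apply mul_le_mul_of_nonneg_left _ (by positivity)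
          apply pow_le_pow_left₀ (by positivity)
          nlinarith
      _ = Real.exp 1 ^ d * ((n:ℝ)+1) ^ (2*d) := by
          congr 1
          rw [← sq, ← pow_mul]
  have hexp : Real.exp δ * Real.exp (-δ * ((n:ℝ)+1)) * Real.exp (δ * n) = 1 := by
    rw [← Real.exp_add, ← Real.exp_add,
      show δ + -δ * ((n:ℝ)+1) + δ * n = 0 from by ring]
    exact Real.exp_zero
  have hfinal : Real.exp 1 ^ d * ((n:ℝ)+1) ^ (2*d) < ε * Real.exp (δ * n) := by
    have hmul := mul_lt_mul_of_pos_right hkey (Real.exp_pos (δ * n))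
    rw [hrpow] at hmul
    calc Real.exp 1 ^ d * ((n:ℝ)+1) ^ (2*d)
        = Real.exp 1 ^ d * Real.exp δ * (((n:ℝ)+1) ^ (2*d) * Real.exp (-δ * ((n:ℝ)+1))) *
            Real.exp (δ * n) := by
          rw [show Real.exp 1 ^ d * Real.exp δ * (((n:ℝ)+1) ^ (2*d) * Real.exp (-δ * ((n:ℝ)+1))) *
            Real.exp (δ * n) = Real.exp 1 ^ d * ((n:ℝ)+1) ^ (2*d) *
              (Real.exp δ * Real.exp (-δ * ((n:ℝ)+1)) * Real.exp (δ * n)) from by ring, hexp,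
            mul_one]
      _ < ε * Real.exp (δ * n) := hmul
  exact lt_of_le_of_lt hbound hfinal

end ConcAux

/-- Concentration around the maximum-entropy distribution (underlying Theorem 1):
for `k ≥ 1`, `0 < m < k` rational, and `d*` the unique entropy maximizer in `Δ^k_m`,
for every `ε > 0` there is `N` such that for all `n ≥ N` with `m·n ∈ ℕ` (say `m·n = M`),
among the states `s : {1,…,n} → {0,…,k}` with total money `∑ᵢ s(i) = M`, the fraction of
states whose empirical distribution is at squared Euclidean distance `≥ ε` from `d*`
is less than `ε`. -/
theorem concentration_max_entropy (k : ℕ) (hk : 1 ≤ k) (m : ℚ)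
    (hm0 : 0 < m) (hmk : (m : ℝ) < k) (dstar : Fin (k + 1) → ℝ)
    (hdstar : dstar ∈ DeltaKM k (m : ℝ))
    (hmax : ∀ d ∈ DeltaKM k (m : ℝ), d ≠ dstar → entropy d < entropy dstar) :
    ∀ ε : ℝ, 0 < ε → ∃ N : ℕ, ∀ n : ℕ, N ≤ n → ∀ M : ℕ, (M : ℚ) = m * n →
      (((Finset.univ.filter (fun s : Fin n → Fin (k + 1) => ∑ i, (s i : ℕ) = M)).filter
          (fun s => ε ≤ ∑ j, (empDist s j - dstar j) ^ 2)).card : ℝ) <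
        ε * ((Finset.univ.filter
          (fun s : Fin n → Fin (k + 1) => ∑ i, (s i : ℕ) = M)).card : ℝ) := by
  intro ε hε
  classical
  obtain ⟨δ, hδ, hδbound⟩ := exists_delta (m:ℝ) dstar hdstar hmax ε hε
  obtain ⟨η, hη, hηbound⟩ := exists_eta dstar (δ/2) (by linarith)
  obtain ⟨N₁, hN₁⟩ := eventually_poly_lt_exp (δ/2) ε (by linarith) hε (k+1)
  refine ⟨max (max N₁ (⌈((k:ℝ)+3)/η⌉₊ + 1)) 1, ?_⟩
  intro n hn M hM
  have hn1 : 1 ≤ n := le_trans (le_max_right _ 1) hn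
  have hn0 : 0 < n := hn1
  have hn' : (0:ℝ) < n := by exact_mod_cast hn0
  have hnN₁ : N₁ ≤ n := le_trans (le_trans (le_max_left _ _) (le_max_left _ 1)) hn
  have hnN₂ : ⌈((k:ℝ)+3)/η⌉₊ + 1 ≤ n := le_trans (le_trans (le_max_right _ _) (le_max_left _ 1)) hn
  have hMreal : (M:ℝ) = (m:ℝ) * n := by exact_mod_cast hM
  have hnclose : ((k:ℝ)+3)/n ≤ η := by
    have h1 : ((k:ℝ)+3)/η ≤ ⌈((k:ℝ)+3)/η⌉₊ := Nat.le_ceil _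
    have h2 : (⌈((k:ℝ)+3)/η⌉₊ : ℝ) + 1 ≤ (n:ℝ) := by exact_mod_cast hnN₂
    rw [div_le_iff₀ hn']
    rw [div_le_iff₀ hη] at h1
    calc ((k:ℝ)+3) ≤ (⌈((k:ℝ)+3)/η⌉₊ : ℝ) * η := h1
      _ ≤ (n:ℝ) * η := by nlinarith
      _ = η * n := by ring
  set S : Finset (Fin n → Fin (k+1)) :=
    Finset.univ.filter (fun s : Fin n → Fin (k + 1) => ∑ i, (s i : ℕ) = M) with hS
  set B : Finset (Fin n → Fin (k+1)) :=
    S.filter (fun s => ε ≤ ∑ j, (empDist s j - dstar j) ^ 2) with hB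
  show (B.card : ℝ) < ε * (S.card : ℝ)
  -- upper bound on B
  have himg : ∀ c ∈ B.image countsOf, (∑ j, c j = n) ∧
      (∑ j : Fin (k+1), (j:ℕ) * c j = M) ∧ ε ≤ ∑ j, ((c j:ℝ)/(n:ℝ) - dstar j)^2 := by
    intro c hc
    rw [Finset.mem_image] at hc
    obtain ⟨s, hsB, rfl⟩ := hc
    have hsB' := Finset.mem_filter.1 hsB
    have hsS := Finset.mem_filter.1 hsB'.1
    refine ⟨sum_countsOf s, ?_, ?_⟩
    · rw [← sum_val_eq_sum_counts s]; exact hsS.2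
    · exact hsB'.2
  have hfiber_up : ∀ c ∈ B.image countsOf, ((B.filter (fun s => countsOf s = c)).card : ℝ) ≤
      Real.exp ((n:ℝ) * (entropy dstar - δ)) := by
    intro c hc
    obtain ⟨hc1, hc2, hc3⟩ := himg c hc
    have hpin : (fun j => (c j:ℝ)/(n:ℝ)) ∈ DeltaKM k (m:ℝ) := by
      refine ⟨fun j => by positivity, ?_, ?_⟩
      · rw [← Finset.sum_div, show ∑ j, (c j:ℝ) = (n:ℝ) by exact_mod_cast congrArg Nat.cast hc1]
        field_simp
      · have hsum : ∑ j : Fin (k+1), ((j:ℕ):ℝ) * ((c j:ℝ)/(n:ℝ))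
            = (∑ j : Fin (k+1), ((j:ℕ):ℝ) * (c j:ℝ))/(n:ℝ) := by
          rw [Finset.sum_div]
          exact Finset.sum_congr rfl fun j _ => by ring
        have hcast : ∑ j : Fin (k+1), ((j:ℕ):ℝ) * (c j:ℝ) = (M:ℝ) := by
          rw [← hc2]; push_cast; rfl
        rw [hsum, hcast, hMreal, mul_div_assoc, div_self (ne_of_gt hn'), mul_one]
    have hent : entropy (fun j => (c j:ℝ)/(n:ℝ)) ≤ entropy dstar - δ := hδbound _ hpin hc3
    calc ((B.filter (fun s => countsOf s = c)).card : ℝ)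
        ≤ ((Finset.univ.filter (fun s : Fin n → Fin (k+1) => countsOf s = c)).card : ℝ) := by
          have : B.filter (fun s => countsOf s = c) ⊆
              Finset.univ.filter (fun s : Fin n → Fin (k+1) => countsOf s = c) := by
            intro s hs
            rw [Finset.mem_filter] at hs ⊢
            exact ⟨Finset.mem_univ s, hs.2⟩
          exact_mod_cast Finset.card_le_card this
      _ ≤ ∏ j ∈ Finset.univ.filter (fun j => c j ≠ 0), ((n : ℝ) / c j) ^ c j :=
          card_counts_le c hc1 hn0
      _ = Real.exp ((n:ℝ) * entropy (fun j => (c j:ℝ)/(n:ℝ))) := (exp_n_entropy c hn0).symm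
      _ ≤ Real.exp ((n:ℝ) * (entropy dstar - δ)) := by
          apply Real.exp_le_exp.2
          exact mul_le_mul_of_nonneg_left hent (Nat.cast_nonneg n)
  have himgcard : ((B.image countsOf).card : ℝ) ≤ ((n:ℝ)+1)^(k+1) := by
    have hle : (B.image countsOf).card ≤ (n+1)^(k+1) := by
      have hbd : ∀ c ∈ B.image countsOf, ∀ j, c j ≤ n := by
        intro c hc j
        rw [Finset.mem_image] at hc
        obtain ⟨s, _, rfl⟩ := hc
        calc countsOf s j ≤ (Finset.univ : Finset (Fin n)).card := Finset.card_filter_le _ _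
          _ = n := by simp
      calc (B.image countsOf).card
          ≤ (Finset.univ : Finset (Fin (k+1) → Fin (n+1))).card := by
            apply Finset.card_le_card_of_injOn
              (fun c => (fun j => (⟨min (c j) n, by omega⟩ : Fin (n+1))))
              (fun _ _ => Finset.mem_univ _)
            intro c hc c' hc' hcc'
            funext j
            have h1 := congrFun hcc' j
            have h2 : min (c j) n = min (c' j) n := congrArg Fin.val h1
            rw [min_eq_left (hbd c hc j), min_eq_left (hbd c' hc' j)] at h2
            exact h2
        _ = (n+1)^(k+1) := by
            rw [Finset.card_univ]
            simp
    calc ((B.image countsOf).card : ℝ) ≤ (((n+1)^(k+1) : ℕ) : ℝ) := by exact_mod_cast hle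
      _ = ((n:ℝ)+1)^(k+1) := by push_cast; ring
  have hBcard : (B.card : ℝ) ≤ ((n:ℝ)+1)^(k+1) * Real.exp ((n:ℝ) * (entropy dstar - δ)) := by
    have h1 : B.card = ∑ c ∈ B.image countsOf, (B.filter (fun s => countsOf s = c)).card :=
      Finset.card_eq_sum_card_fiberwise (fun s hs => Finset.mem_image_of_mem _ hs)
    calc (B.card:ℝ) = ∑ c ∈ B.image countsOf, ((B.filter (fun s => countsOf s = c)).card : ℝ) := by
          rw [h1]; push_cast; rfl
      _ ≤ ∑ _c ∈ B.image countsOf, Real.exp ((n:ℝ)*(entropy dstar - δ)) :=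
          Finset.sum_le_sum hfiber_up
      _ = ((B.image countsOf).card : ℝ) * Real.exp ((n:ℝ)*(entropy dstar - δ)) := by
          rw [Finset.sum_const, nsmul_eq_mul]
      _ ≤ ((n:ℝ)+1)^(k+1) * Real.exp ((n:ℝ)*(entropy dstar - δ)) :=
          mul_le_mul_of_nonneg_right himgcard (Real.exp_pos _).le
  -- lower bound on S
  obtain ⟨c, hc1, hc2, hc3⟩ := exists_good_counts hk (m:ℝ) dstar hdstar n M hn0 hMreal
  have hclose : ∀ j, |(c j:ℝ)/(n:ℝ) - dstar j| ≤ η := fun j => (hc3 j).trans hnclose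
  have hHc : entropy dstar - δ/2 < entropy (fun j => (c j:ℝ)/(n:ℝ)) := hηbound _ hclose
  have hfact : (n.factorial : ℝ) ≤ (∏ j, ((c j).factorial : ℝ)) * (S.card : ℝ) := by
    have := factorial_le_prodfact_mul_card c hc1 M hc2
    exact_mod_cast this
  have hexple : Real.exp ((n:ℝ) * entropy (fun j => (c j:ℝ)/(n:ℝ))) ≤
      (Real.exp 1 * n)^(k+1) * (S.card : ℝ) := by
    have h1 := exp_entropy_mul_factorials_le c hc1 hn0
    have hprodpos : (0:ℝ) < ∏ j, ((c j).factorial : ℝ) :=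
      Finset.prod_pos fun j _ => by exact_mod_cast (c j).factorial_pos
    have h2 : Real.exp ((n:ℝ) * entropy (fun j => (c j:ℝ)/(n:ℝ))) * ∏ j, ((c j).factorial : ℝ) ≤
        ((Real.exp 1 * n)^(k+1) * (S.card : ℝ)) * ∏ j, ((c j).factorial : ℝ) := by
      calc Real.exp ((n:ℝ) * entropy (fun j => (c j:ℝ)/(n:ℝ))) * ∏ j, ((c j).factorial : ℝ)
          ≤ (Real.exp 1 * n)^(k+1) * (n.factorial : ℝ) := h1
        _ ≤ (Real.exp 1 * n)^(k+1) * ((∏ j, ((c j).factorial : ℝ)) * (S.card : ℝ)) :=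
            mul_le_mul_of_nonneg_left hfact (by positivity)
        _ = ((Real.exp 1 * n)^(k+1) * (S.card : ℝ)) * ∏ j, ((c j).factorial : ℝ) := by ring
    exact le_of_mul_le_mul_right h2 hprodpos
  have hlow : Real.exp ((n:ℝ) * (entropy dstar - δ/2)) ≤ (Real.exp 1 * n)^(k+1) * (S.card : ℝ) := by
    refine le_trans ?_ hexple
    apply Real.exp_le_exp.2
    exact mul_le_mul_of_nonneg_left (le_of_lt hHc) (Nat.cast_nonneg n)
  have hpoly := hN₁ n hnN₁
  have hXpos : (0:ℝ) < (Real.exp 1 * n)^(k+1) := by positivity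
  have hmid : (((n:ℝ)+1)^(k+1) * Real.exp ((n:ℝ)*(entropy dstar - δ))) * (Real.exp 1 * n)^(k+1)
      < ε * Real.exp ((n:ℝ)*(entropy dstar - δ/2)) := by
    have hsplit : Real.exp ((n:ℝ)*(entropy dstar - δ/2))
        = Real.exp ((δ/2) * n) * Real.exp ((n:ℝ)*(entropy dstar - δ)) := by
      rw [← Real.exp_add]
      congr 1
      ring
    rw [hsplit]
    calc (((n:ℝ)+1)^(k+1) * Real.exp ((n:ℝ)*(entropy dstar - δ))) * (Real.exp 1 * n)^(k+1)
        = (((n:ℝ)+1)^(k+1) * (Real.exp 1 * n)^(k+1)) * Real.exp ((n:ℝ)*(entropy dstar - δ)) := by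
          ring
      _ < (ε * Real.exp ((δ/2) * n)) * Real.exp ((n:ℝ)*(entropy dstar - δ)) :=
          mul_lt_mul_of_pos_right hpoly (Real.exp_pos _)
      _ = ε * (Real.exp ((δ/2) * n) * Real.exp ((n:ℝ)*(entropy dstar - δ))) := by ring
  have key : (B.card:ℝ) * (Real.exp 1 * n)^(k+1) < (ε * (S.card:ℝ)) * (Real.exp 1 * n)^(k+1) := by
    calc (B.card:ℝ) * (Real.exp 1 * n)^(k+1)
        ≤ (((n:ℝ)+1)^(k+1) * Real.exp ((n:ℝ)*(entropy dstar - δ))) * (Real.exp 1 * n)^(k+1) :=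
          mul_le_mul_of_nonneg_right hBcard hXpos.le
      _ < ε * Real.exp ((n:ℝ)*(entropy dstar - δ/2)) := hmid
      _ ≤ ε * ((Real.exp 1 * n)^(k+1) * (S.card:ℝ)) := mul_le_mul_of_nonneg_left hlow hε.le
      _ = (ε * (S.card:ℝ)) * (Real.exp 1 * n)^(k+1) := by ring
  exact lt_of_mul_lt_mul_right key hXpos.le
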